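/- The key separation identity: for distinct λ_1, ..., λ_g and any n with 1 ≤ n ≤ g, and for any j ≠ k, one has ∂/∂λ_j [β_n'(λ_k)/β'(λ_k)] = (1/(β'(λ_k)(λ_j - λ_k))) · ∂(β_n(λ_k))/∂λ_j, where β(λ) = ∏_{l=1}^g (λ - λ_l), β_n(λ) is its degree-n truncation, primes denote λ-derivatives, and evaluation is at the roots. -/

import Mathlib

/-- `β(λ) = ∏_{l} (λ - λ_l)` with the roots `λ_l` indeterminates. -/
noncomputable def betaP (F : Type*) [Field F] (g : ℕ) :
    Polynomial (MvPolynomial (Fin g) F) :=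
  ∏ l : Fin g, (Polynomial.X - Polynomial.C (MvPolynomial.X l))

/-- The truncation `β_n(λ) = λ^n + β_1 λ^{n-1} + ⋯ + β_n`. -/
noncomputable def betaTrunc (F : Type*) [Field F] (g n : ℕ) :
    Polynomial (MvPolynomial (Fin g) F) :=
  ∑ m ∈ Finset.range (n + 1),
    Polynomial.C ((betaP F g).coeff (g - m)) * Polynomial.X ^ (n - m)

/-- The canonical map into the field of rational functions of the roots. -/
noncomputable def toFrac (F : Type*) [Field F] (g : ℕ) :
    MvPolynomial (Fin g) F →+* FractionRing (MvPolynomial (Fin g) F) :=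
  algebraMap (MvPolynomial (Fin g) F) (FractionRing (MvPolynomial (Fin g) F))

namespace SeparationAux

open Polynomial Finset

/-- `Q_j(λ) = ∏_{l ≠ j} (λ - λ_l)`. -/
noncomputable def Qp (F : Type*) [Field F] (g : ℕ) (j : Fin g) :
    Polynomial (MvPolynomial (Fin g) F) :=
  ∏ l ∈ Finset.univ.erase j, (Polynomial.X - Polynomial.C (MvPolynomial.X l))

/-- The degree-`(n-1)` truncation of `Q_j`. -/
noncomputable def Sp (F : Type*) [Field F] (g n : ℕ) (j : Fin g) :
    Polynomial (MvPolynomial (Fin g) F) :=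
  ∑ m ∈ Finset.range n,
    Polynomial.C ((Polynomial.X * Qp F g j).coeff (g - m)) * Polynomial.X ^ (n - 1 - m)

variable {F : Type*} [Field F] {g n : ℕ} {j k : Fin g}

lemma betaP_eq (j : Fin g) : betaP F g = (X - C (MvPolynomial.X j)) * Qp F g j :=
  (Finset.mul_prod_erase _ _ (Finset.mem_univ j)).symm

lemma betaP_natDegree : (betaP F g).natDegree = g := by
  rw [betaP, Polynomial.natDegree_prod _ _ fun l _ => X_sub_C_ne_zero _]
  simp

lemma betaP_monic : (betaP F g).Monic :=
  monic_prod_of_monic _ _ fun l _ => monic_X_sub_C _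

lemma Qp_natDegree (j : Fin g) : (Qp F g j).natDegree = g - 1 := by
  rw [Qp, Polynomial.natDegree_prod _ _ fun l _ => X_sub_C_ne_zero _]
  simp [Finset.card_erase_of_mem]

lemma Qp_monic (j : Fin g) : (Qp F g j).Monic :=
  monic_prod_of_monic _ _ fun l _ => monic_X_sub_C _

lemma XQp_coeff_g (hg : 1 ≤ g) (j : Fin g) : (X * Qp F g j).coeff g = 1 := by
  have h := Polynomial.coeff_X_mul (Qp F g j) (g - 1)
  rw [show g - 1 + 1 = g by omega] at h
  rw [h]
  have := (Qp_monic (F := F) j).coeff_natDegree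
  rwa [Qp_natDegree] at this

lemma betaP_coeff_sub (j : Fin g) (t : ℕ) :
    (betaP F g).coeff t = (X * Qp F g j).coeff t
      - MvPolynomial.X j * (Qp F g j).coeff t := by
  rw [betaP_eq j, sub_mul, Polynomial.coeff_sub, Polynomial.coeff_C_mul]

/-- The key truncation identity `β_n = (λ - λ_j)·S + c`. -/
lemma key (hn1 : 1 ≤ n) (hng : n ≤ g) (j : Fin g) :
    betaTrunc F g n = (X - C (MvPolynomial.X j)) * Sp F g n j
      + C ((X * Qp F g j).coeff (g - n)) := by
  have hXS : X * Sp F g n j = ∑ m ∈ Finset.range n,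
      C ((X * Qp F g j).coeff (g - m)) * X ^ (n - m) := by
    rw [Sp, Finset.mul_sum]
    refine Finset.sum_congr rfl fun m hm => ?_
    have hm' : m < n := Finset.mem_range.mp hm
    rw [mul_left_comm, ← pow_succ', show n - 1 - m + 1 = n - m by omega]
  have hCS : C (MvPolynomial.X j) * Sp F g n j = ∑ m ∈ Finset.range n,
      C (MvPolynomial.X j * (X * Qp F g j).coeff (g - m)) * X ^ (n - 1 - m) := by
    rw [Sp, Finset.mul_sum]
    refine Finset.sum_congr rfl fun m hm => ?_
    rw [← mul_assoc, ← Polynomial.C_mul]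
  rw [sub_mul, hXS, hCS, betaTrunc, sub_add_eq_add_sub]
  have hA := Finset.sum_range_succ
    (fun m => C ((X * Qp F g j).coeff (g - m)) * X ^ (n - m)) n
  have hB := Finset.sum_range_succ'
    (fun m => C ((X * Qp F g j).coeff (g - m)) * X ^ (n - m)) n
  rw [Nat.sub_self, pow_zero, mul_one] at hA
  have hpeel : (∑ m ∈ Finset.range n, C ((X * Qp F g j).coeff (g - m)) * X ^ (n - m))
      + C ((X * Qp F g j).coeff (g - n))
      = (∑ i ∈ Finset.range n, C ((X * Qp F g j).coeff (g - (i + 1))) * X ^ (n - (i + 1)))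
        + C ((X * Qp F g j).coeff (g - 0)) * X ^ (n - 0) := by
    rw [← hA, hB]
  rw [hpeel]
  rw [Finset.sum_range_succ'
    (fun m => C ((betaP F g).coeff (g - m)) * X ^ (n - m)) n]
  have hsum : (∑ i ∈ Finset.range n,
        C ((betaP F g).coeff (g - (i + 1))) * X ^ (n - (i + 1)))
      = (∑ i ∈ Finset.range n, C ((X * Qp F g j).coeff (g - (i + 1))) * X ^ (n - (i + 1)))
        - ∑ m ∈ Finset.range n,
            C (MvPolynomial.X j * (X * Qp F g j).coeff (g - m)) * X ^ (n - 1 - m) := by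
    rw [← Finset.sum_sub_distrib]
    refine Finset.sum_congr rfl fun i hi => ?_
    have hi' : i < n := Finset.mem_range.mp hi
    rw [show n - (i + 1) = n - 1 - i by omega, ← sub_mul, ← Polynomial.C_sub]
    congr 2
    rw [betaP_coeff_sub j]
    congr 1
    have h := Polynomial.coeff_X_mul (Qp F g j) (g - (i + 1))
    rw [show g - (i + 1) + 1 = g - i by omega] at h
    rw [h]
  have h1 : (betaP F g).coeff (g - 0) = 1 := by
    simpa [betaP_natDegree] using (betaP_monic (F := F) (g := g)).coeff_natDegree
  have h2 : (X * Qp F g j).coeff (g - 0) = 1 := by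
    simpa using XQp_coeff_g (le_trans hn1 hng) j
  rw [hsum, h1, h2]
  ring

lemma Qp_eval_self (hjk : j ≠ k) : (Qp F g j).eval (MvPolynomial.X k) = 0 := by
  rw [Qp, Polynomial.eval_prod]
  exact Finset.prod_eq_zero (Finset.mem_erase.mpr ⟨hjk.symm, Finset.mem_univ k⟩) (by simp)

lemma kill_prod_coeff (j : Fin g) (s : Finset (Fin g)) (hs : j ∉ s) (i : ℕ) :
    MvPolynomial.pderiv j
      ((∏ l ∈ s, (X - C (MvPolynomial.X l)) : Polynomial (MvPolynomial (Fin g) F)).coeff i)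
      = 0 := by
  induction s using Finset.induction generalizing i with
  | empty => rcases i with _ | i <;> simp [Polynomial.coeff_one]
  | @insert a s ha ih =>
    rw [Finset.prod_insert ha, Polynomial.coeff_mul, map_sum]
    refine Finset.sum_eq_zero fun p _ => ?_
    have haj : a ≠ j := fun h => hs (h ▸ Finset.mem_insert_self a s)
    have h1 : MvPolynomial.pderiv j
        ((X - C (MvPolynomial.X a) : Polynomial (MvPolynomial (Fin g) F)).coeff p.1) = 0 := by
      rcases p with ⟨_ | _ | p1, p2⟩ <;>
        simp [Polynomial.coeff_X, MvPolynomial.pderiv_X_of_ne haj]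
    rw [MvPolynomial.pderiv_mul, h1, zero_mul,
      ih (fun h => hs (Finset.mem_insert_of_mem h)) p.2, mul_zero, add_zero]

lemma kill_Qp_coeff (j : Fin g) (i : ℕ) :
    MvPolynomial.pderiv j ((Qp F g j).coeff i) = 0 :=
  kill_prod_coeff j _ (by simp) i

lemma kill_XQp_coeff (j : Fin g) (i : ℕ) :
    MvPolynomial.pderiv j ((X * Qp F g j).coeff i) = 0 := by
  rcases i with _ | i
  · simp [Polynomial.mul_coeff_zero]
  · rw [Polynomial.coeff_X_mul]; exact kill_Qp_coeff j i

lemma kill_Sp_coeff (j : Fin g) (i : ℕ) :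
    MvPolynomial.pderiv j ((Sp F g n j).coeff i) = 0 := by
  rw [Sp, Polynomial.finset_sum_coeff, map_sum]
  refine Finset.sum_eq_zero fun m _ => ?_
  rw [Polynomial.coeff_C_mul, Polynomial.coeff_X_pow, MvPolynomial.pderiv_mul,
    kill_XQp_coeff j, zero_mul, zero_add]
  split_ifs <;> simp

lemma kill_pow (i : ℕ) (h : j ≠ k) :
    MvPolynomial.pderiv j ((MvPolynomial.X k : MvPolynomial (Fin g) F) ^ i) = 0 := by
  rw [Derivation.leibniz_pow, MvPolynomial.pderiv_X_of_ne (Ne.symm h), smul_zero, smul_zero]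

lemma kill_eval (h : j ≠ k) (p : Polynomial (MvPolynomial (Fin g) F))
    (hp : ∀ i, MvPolynomial.pderiv j (p.coeff i) = 0) :
    MvPolynomial.pderiv j (p.eval (MvPolynomial.X k)) = 0 := by
  rw [Polynomial.eval_eq_sum_range, map_sum]
  refine Finset.sum_eq_zero fun i _ => ?_
  rw [MvPolynomial.pderiv_mul, hp, kill_pow i h, zero_mul, mul_zero, add_zero]

lemma kill_deriv (p : Polynomial (MvPolynomial (Fin g) F))
    (hp : ∀ i, MvPolynomial.pderiv j (p.coeff i) = 0) (i : ℕ) :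
    MvPolynomial.pderiv j ((Polynomial.derivative p).coeff i) = 0 := by
  rw [Polynomial.coeff_derivative, MvPolynomial.pderiv_mul, hp]
  simp

end SeparationAux

set_option maxHeartbeats 1000000 in
set_option synthInstance.maxHeartbeats 400000 in
open SeparationAux Polynomial in
theorem separation_identity_offdiag (F : Type*) [Field F] [CharZero F] (g n : ℕ)
    (hn1 : 1 ≤ n) (hng : n ≤ g) (j k : Fin g) (hjk : j ≠ k) :
    (toFrac F g (MvPolynomial.pderiv j
          ((Polynomial.derivative (betaTrunc F g n)).eval (MvPolynomial.X k))) *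
        toFrac F g ((Polynomial.derivative (betaP F g)).eval (MvPolynomial.X k)) -
      toFrac F g ((Polynomial.derivative (betaTrunc F g n)).eval (MvPolynomial.X k)) *
        toFrac F g (MvPolynomial.pderiv j
          ((Polynomial.derivative (betaP F g)).eval (MvPolynomial.X k)))) /
      (toFrac F g ((Polynomial.derivative (betaP F g)).eval (MvPolynomial.X k))) ^ 2 =
    (toFrac F g ((Polynomial.derivative (betaP F g)).eval (MvPolynomial.X k)) *
        (toFrac F g (MvPolynomial.X j) - toFrac F g (MvPolynomial.X k)))⁻¹ *
      toFrac F g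
        (MvPolynomial.pderiv j ((betaTrunc F g n).eval (MvPolynomial.X k))) := by
  set R := MvPolynomial (Fin g) F
  set a : R := MvPolynomial.X j with ha
  set b : R := MvPolynomial.X k with hb
  set s0 : R := (Sp F g n j).eval b with hs0
  set s1 : R := (Polynomial.derivative (Sp F g n j)).eval b with hs1
  set q1 : R := (Polynomial.derivative (Qp F g j)).eval b with hq1
  -- derivative of (X - C a) * P  is  P + (X - C a) * P'
  have hderiv : ∀ (c : R) (P : Polynomial R), Polynomial.derivative ((X - C c) * P)
      = P + (X - C c) * Polynomial.derivative P := by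
    intro c P
    rw [derivative_mul, derivative_sub, derivative_X, derivative_C, sub_zero, one_mul]
  have hpba : MvPolynomial.pderiv j (b - a) = -1 := by
    rw [map_sub, ha, hb, MvPolynomial.pderiv_X_of_ne (Ne.symm hjk),
      MvPolynomial.pderiv_X_self, zero_sub]
  -- evaluations
  have h2eval : (Polynomial.derivative (betaTrunc F g n)).eval b = s0 + (b - a) * s1 := by
    rw [key hn1 hng j, derivative_add, derivative_C, add_zero, hderiv a]
    simp [hs0, hs1]
  have h4eval : (Polynomial.derivative (betaP F g)).eval b = (b - a) * q1 := by
    rw [betaP_eq j, hderiv a]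
    simp [Qp_eval_self hjk, hq1]
    exact Qp_eval_self hjk
  have h5eval : (betaTrunc F g n).eval b
      = (b - a) * s0 + (X * Qp F g j).coeff (g - n) := by
    rw [key hn1 hng j]
    simp [hs0]
    exact Or.inl ha.symm
  -- pderiv computations
  have hkS := kill_Sp_coeff (F := F) (g := g) (n := n) j
  have hkQ := kill_Qp_coeff (F := F) (g := g) j
  have h1p : MvPolynomial.pderiv j ((Polynomial.derivative (betaTrunc F g n)).eval b)
      = -s1 := by
    rw [h2eval, map_add, kill_eval hjk _ hkS, MvPolynomial.pderiv_mul, hpba,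
      kill_eval hjk _ (kill_deriv _ hkS), mul_zero, add_zero, zero_add, neg_one_mul]
  have h3p : MvPolynomial.pderiv j ((Polynomial.derivative (betaP F g)).eval b)
      = -q1 := by
    rw [h4eval, MvPolynomial.pderiv_mul, hpba,
      kill_eval hjk _ (kill_deriv _ hkQ), mul_zero, add_zero, neg_one_mul]
  have h5p : MvPolynomial.pderiv j ((betaTrunc F g n).eval b) = -s0 := by
    rw [h5eval, map_add, kill_XQp_coeff j, add_zero, MvPolynomial.pderiv_mul, hpba,
      kill_eval hjk _ hkS, mul_zero, add_zero, neg_one_mul]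
  -- nonvanishing
  have hXne : ∀ l : Fin g, l ≠ k → b - MvPolynomial.X l ≠ 0 := by
    intro l hl
    exact sub_ne_zero.mpr fun h => hl (MvPolynomial.X_injective h).symm
  have hdne : (Polynomial.derivative (betaP F g)).eval b ≠ 0 := by
    have hd : (Polynomial.derivative (betaP F g)).eval b = (Qp F g k).eval b := by
      rw [betaP_eq k, hderiv b]
      simp [hb]
    rw [hd, Qp, Polynomial.eval_prod]
    refine Finset.prod_ne_zero_iff.mpr fun l hl => ?_
    simpa using hXne l (Finset.mem_erase.mp hl).1
  have hinj : ∀ x : R, toFrac F g x = 0 ↔ x = 0 := fun x =>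
    IsFractionRing.to_map_eq_zero_iff
  have hmul : (b - a) * q1 ≠ 0 := h4eval ▸ hdne
  have hq1ne : toFrac F g q1 ≠ 0 := fun h0 =>
    (mul_ne_zero_iff.mp hmul).2 ((hinj q1).mp h0)
  have hbane : toFrac F g b - toFrac F g a ≠ 0 := by
    rw [← (toFrac F g).map_sub]
    exact fun h0 => (mul_ne_zero_iff.mp hmul).1 ((hinj _).mp h0)
  rw [h1p, h2eval, h3p, h4eval, h5p]
  simp only [(toFrac F g).map_neg, (toFrac F g).map_mul, (toFrac F g).map_add, (toFrac F g).map_sub]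
  set A := toFrac F g a
  set B := toFrac F g b
  set S0 := toFrac F g s0
  set S1 := toFrac F g s1
  set Q1 := toFrac F g q1
  have habne : A - B ≠ 0 := by
    rw [show A - B = -(B - A) by ring]
    exact neg_ne_zero.mpr hbane
  field_simp [hbane, habne, hq1ne]
  ring
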